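/- Let (B, ·) be a group and γ : B → Aut(B, ·) a map satisfying γ(γ(x)(y) · x) = γ(y) γ(x) for all x, y ∈ B. Define y ∘ x = γ(x)(y) · x. Then (B, ∘) is a group and (B, ·, ∘) is a (right) skew brace. -/

import Mathlib

/-- A (right) skew brace: `(B, ·)` (the ambient group structure) and `(B, ∘)`
(given by `circ`, with unit `cone` and inverse `cinv`) are groups, related by
`((y · z) ∘ x) · x⁻¹ = ((y ∘ x) · x⁻¹) · ((z ∘ x) · x⁻¹)`. -/
structure RightSkewBrace (B : Type*) [Group B] where
  circ : B → B → B
  circ_assoc : ∀ x y z : B, circ (circ x y) z = circ x (circ y z)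
  cone : B
  cone_circ : ∀ x : B, circ cone x = x
  circ_cone : ∀ x : B, circ x cone = x
  cinv : B → B
  cinv_circ : ∀ x : B, circ (cinv x) x = cone
  circ_cinv : ∀ x : B, circ x (cinv x) = cone
  compat : ∀ x y z : B,
    circ (y * z) x * x⁻¹ = (circ y x * x⁻¹) * (circ z x * x⁻¹)

namespace RightSkewBrace

variable {B : Type*} [Group B]

/-- The gamma function: `γ(x)(y) = (y ∘ x) · x⁻¹`. -/
def gamma (S : RightSkewBrace B) (x y : B) : B := S.circ y x * x⁻¹

/-- The star commutator: `x * y = x⁻¹ · (x ∘ y) · y⁻¹`. -/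
def star (S : RightSkewBrace B) (x y : B) : B := x⁻¹ * S.circ x y * y⁻¹

/-- The commutator `[a, b] = a⁻¹ b⁻¹ a b` in the additive group `(B, ·)`. -/
def comm (a b : B) : B := a⁻¹ * b⁻¹ * a * b

/-- Membership in the annihilator `Ann(B) = Z(B,·) ∩ ker γ ∩ C_B(γ(B))`. -/
def inAnn (S : RightSkewBrace B) (c : B) : Prop :=
  (∀ x : B, c * x = x * c) ∧ (∀ y : B, S.gamma c y = y) ∧ (∀ y : B, S.gamma y c = c)

/-- Membership in `B' = [B,B] · [B, γ(B)]`, the subgroup of `(B,·)` generated by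
all additive commutators and all star commutators. -/
def inDerived (S : RightSkewBrace B) (x : B) : Prop :=
  x ∈ Subgroup.closure { z : B | ∃ a b : B, z = comm a b ∨ z = S.star a b }

/-- `B` is a bi-skew brace: `(B, ∘, ·)` is also a (right) skew brace, i.e. the
skew brace compatibility holds with the roles of the operations exchanged. -/
def IsBiSkew (S : RightSkewBrace B) : Prop :=
  ∀ x y z : B, S.circ (S.circ y z * x) (S.cinv x) =
    S.circ (S.circ (y * x) (S.cinv x)) (S.circ (z * x) (S.cinv x))

/-- `B` is λ-homomorphic: `γ : (B, ·) → Aut(B, ·)` is a homomorphism,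
`γ(x·y) = γ(x)γ(y)` (apply `γ(x)` first, maps acting on the right). -/
def IsLambdaHom (S : RightSkewBrace B) : Prop :=
  ∀ x y z : B, S.gamma (x * y) z = S.gamma y (S.gamma x z)

/-- `B` is inner: every `γ(y)` is an inner automorphism of `(B, ·)`. -/
def IsInner (S : RightSkewBrace B) : Prop :=
  ∀ y : B, ∃ t : B, ∀ x : B, S.gamma y x = t⁻¹ * x * t

end RightSkewBrace

open RightSkewBrace

/-- An isoclinism of skew braces, phrased on representatives: `xi` induces a
skew brace isomorphism `B₁/Ann(B₁) → B₂/Ann(B₂)`, `theta` restricts to a skew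
brace isomorphism `B₁' → B₂'`, and the pair is compatible with the additive
commutator map and the star commutator map. -/
structure Isoclinism {B₁ B₂ : Type*} [Group B₁] [Group B₂]
    (S₁ : RightSkewBrace B₁) (S₂ : RightSkewBrace B₂) where
  xi : B₁ → B₂
  theta : B₁ → B₂
  xi_surj : ∀ u : B₂, ∃ x : B₁, S₂.inAnn (u⁻¹ * xi x)
  xi_inj : ∀ x y : B₁, S₂.inAnn ((xi x)⁻¹ * xi y) → S₁.inAnn (x⁻¹ * y)
  xi_congr : ∀ x y : B₁, S₁.inAnn (x⁻¹ * y) → S₂.inAnn ((xi x)⁻¹ * xi y)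
  xi_mul : ∀ x y : B₁, S₂.inAnn ((xi (x * y))⁻¹ * (xi x * xi y))
  xi_circ : ∀ x y : B₁, S₂.inAnn ((xi (S₁.circ x y))⁻¹ * S₂.circ (xi x) (xi y))
  theta_maps : ∀ x : B₁, S₁.inDerived x → S₂.inDerived (theta x)
  theta_mul : ∀ x y : B₁, S₁.inDerived x → S₁.inDerived y →
    theta (x * y) = theta x * theta y
  theta_circ : ∀ x y : B₁, S₁.inDerived x → S₁.inDerived y →
    theta (S₁.circ x y) = S₂.circ (theta x) (theta y)
  theta_inj : ∀ x y : B₁, S₁.inDerived x → S₁.inDerived y → theta x = theta y → x = y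
  theta_surj : ∀ u : B₂, S₂.inDerived u → ∃ x : B₁, S₁.inDerived x ∧ theta x = u
  comm_comm : ∀ x y : B₁, theta (comm x y) = comm (xi x) (xi y)
  star_comm : ∀ x y : B₁, theta (S₁.star x y) = S₂.star (xi x) (xi y)

/-- conversely, if `(B, ·)` is a group and `γ : B → Aut(B, ·)`
satisfies `γ(γ(x)(y) · x) = γ(y) γ(x)`, then `y ∘ x := γ(x)(y) · x` makes
`(B, ∘)` a group and `(B, ·, ∘)` a right skew brace. -/
theorem skewBrace_of_gamma {B : Type*} [Group B] (g : B → B → B)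
    (hbij : ∀ x : B, Function.Bijective (g x))
    (hmul : ∀ x y z : B, g x (y * z) = g x y * g x z)
    (hfe : ∀ x y z : B, g (g x y * x) z = g x (g y z)) :
    -- write `y ∘ x := g x y * x`; then `(B, ∘)` is a group:
    (∀ x y z : B, g z (g y x * y) * z = g (g z y * z) x * (g z y * z)) ∧
    (∃ e : B, (∀ x : B, g x e * x = x) ∧ (∀ x : B, g e x * e = x) ∧
      ∃ i : B → B, (∀ x : B, g x (i x) * x = e) ∧ (∀ x : B, g (i x) x * i x = e)) ∧
    -- and `(B, ·, ∘)` is a right skew brace: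
    (∀ x y z : B, (g x (y * z) * x) * x⁻¹ =
      ((g x y * x) * x⁻¹) * ((g x z * x) * x⁻¹)) := by

  have hinj : ∀ x : B, Function.Injective (g x) := fun x => (hbij x).1
  have hone : ∀ x : B, g x 1 = 1 := by
    intro x
    have h := hmul x 1 1
    rw [one_mul] at h
    exact (left_eq_mul.mp h)
  have hg1 : ∀ z : B, g 1 z = z := by
    intro z
    have h := hfe 1 1 z
    rw [hone, one_mul] at h
    exact hinj 1 h.symm
  choose i hi using fun x => (hbij x).2 x⁻¹
  set op : B → B → B := fun a b => g b a * b with hop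
  have assoc : ∀ x y z : B, op (op x y) z = op x (op y z) := by
    intro x y z
    simp only [hop]
    rw [hmul, hfe, mul_assoc]
  have lid : ∀ x : B, op 1 x = x := by
    intro x; simp [hop, hone]
  have rid : ∀ x : B, op x 1 = x := by
    intro x; simp [hop, hg1]
  have linv : ∀ x : B, op (i x) x = 1 := by
    intro x; simp [hop, hi]
  have rinv : ∀ x : B, op x (i x) = 1 := by
    intro x
    calc op x (i x) = op 1 (op x (i x)) := (lid _).symm
      _ = op (op (i (i x)) (i x)) (op x (i x)) := by rw [linv]
      _ = op (i (i x)) (op (i x) (op x (i x))) := assoc _ _ _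
      _ = op (i (i x)) (op (op (i x) x) (i x)) := by rw [assoc]
      _ = op (i (i x)) (op 1 (i x)) := by rw [linv]
      _ = op (i (i x)) (i x) := by rw [lid]
      _ = 1 := linv _
  refine ⟨assoc, ⟨1, ?_, ?_, i, linv, rinv⟩, ?_⟩
  · intro x; rw [hone, one_mul]
  · intro x; rw [hg1, mul_one]
  · intro x y z
    rw [hmul]
    group
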